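/- Let $\bar F : [0,\infty) \to [0,1]$ be a decreasing function and for $s > 0$, $t \in [0, s/d)$ define $D(s,t) = \frac{d}{s-dt}\int_t^{s-(d-1)t} \bar F(x)\,dx$, with $D(s, s/d) := d\bar F(s/d)$, and $D(s) = \min_{t \in [0, s/d]} D(s,t)$. Then $D$ is decreasing: for $s' \le s$, $D(s) \le D(s')$. -/

import Mathlib

open intervalIntegral

theorem stmt_4 (d : ℕ) (hd : 2 ≤ d) (Fbar : ℝ → ℝ)
    (hmono : AntitoneOn Fbar (Set.Ici 0)) (hcont : Continuous Fbar)
    (hrange : ∀ x ≥ (0:ℝ), Fbar x ∈ Set.Icc (0:ℝ) 1)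
    (D2 : ℝ → ℝ → ℝ)
    (hD2 : ∀ s > (0:ℝ), ∀ t, 0 ≤ t → t < s / d →
      D2 s t = d / (s - d * t) * ∫ x in t..(s - (d - 1) * t), Fbar x)
    (hD2' : ∀ s > (0:ℝ), D2 s (s / d) = d * Fbar (s / d))
    (D1 : ℝ → ℝ)
    (hD1 : ∀ s > (0:ℝ), D1 s = sInf (D2 s '' Set.Icc 0 (s / d))) :
    ∀ s' s : ℝ, 0 < s' → s' ≤ s → D1 s ≤ D1 s' := by
  intro s' s hs' hle
  have hs : 0 < s := lt_of_lt_of_le hs' hle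
  have hd0 : (0:ℝ) < (d:ℝ) := by
    have : (2:ℝ) ≤ (d:ℝ) := by exact_mod_cast hd
    linarith
  -- nonnegativity of D2 on the relevant set
  have hnonneg : ∀ σ > (0:ℝ), ∀ t ∈ Set.Icc (0:ℝ) (σ / d), 0 ≤ D2 σ t := by
    intro σ hσ t ht
    rcases eq_or_lt_of_le ht.2 with h | h
    · rw [h, hD2' σ hσ]
      have h0 : (0:ℝ) ≤ σ / d := le_of_lt (div_pos hσ hd0)
      exact mul_nonneg (le_of_lt hd0) (hrange _ h0).1
    · rw [hD2 σ hσ t ht.1 h]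
      have hκ : 0 < σ - d * t := by
        have := (lt_div_iff₀ hd0).mp h
        nlinarith
      apply mul_nonneg (div_nonneg (le_of_lt hd0) (le_of_lt hκ))
      apply intervalIntegral.integral_nonneg
      · nlinarith
      · intro u hu
        exact (hrange u (le_trans ht.1 hu.1)).1
  have hbdd : BddBelow (D2 s '' Set.Icc 0 (s / d)) := by
    refine ⟨0, ?_⟩
    rintro b ⟨t, ht, rfl⟩
    exact hnonneg s hs t ht
  rw [hD1 s hs, hD1 s' hs']
  apply le_csInf
  · exact (Set.nonempty_Icc.mpr (le_of_lt (div_pos hs' hd0))).image _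
  rintro b ⟨t', ht', rfl⟩
  set δ : ℝ := (s - s') / d with hδdef
  have hδ0 : 0 ≤ δ := div_nonneg (by linarith) (le_of_lt hd0)
  set t : ℝ := t' + δ with htdef
  have ht0 : 0 ≤ t := by
    have := ht'.1; simp only [htdef]; linarith
  have htub : t ≤ s / d := by
    have h1 : t' ≤ s' / d := ht'.2
    have : s' / d + δ = s / d := by
      rw [hδdef]; ring
    simp only [htdef]; linarith
  have hmem : t ∈ Set.Icc (0:ℝ) (s / d) := ⟨ht0, htub⟩
  have key : D2 s t ≤ D2 s' t' := by
    rcases eq_or_lt_of_le ht'.2 with h | h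
    · -- t' = s'/d, so t = s/d
      have hts : t = s / d := by
        rw [htdef, h, hδdef]; field_simp; ring
      rw [h, hts, hD2' s hs, hD2' s' hs']
      apply mul_le_mul_of_nonneg_left _ (le_of_lt hd0)
      apply hmono (Set.mem_Ici.mpr (le_of_lt (div_pos hs' hd0)))
        (Set.mem_Ici.mpr (le_of_lt (div_pos hs hd0)))
      gcongr
    · -- t' < s'/d
      set κ : ℝ := s' - d * t' with hκdef
      have hκ0 : 0 < κ := by
        have := (lt_div_iff₀ hd0).mp h
        nlinarith
      have hteq : s - d * t = κ := by
        simp only [htdef, hδdef, hκdef]; field_simp; ring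
      have htlt : t < s / d := by
        rw [lt_div_iff₀ hd0]
        nlinarith [hteq]
      rw [hD2 s hs t ht0 htlt, hD2 s' hs' t' ht'.1 h]
      have hb1 : s - ((d:ℝ) - 1) * t = t + κ := by nlinarith [hteq]
      have hb2 : s' - ((d:ℝ) - 1) * t' = t' + κ := by
        simp only [hκdef]; ring
      rw [hb1, hb2, hteq, hκdef]
      apply mul_le_mul_of_nonneg_left _ (div_nonneg (le_of_lt hd0) (le_of_lt hκ0))
      -- ∫ t..t+κ Fbar ≤ ∫ t'..t'+κ Fbar
      have hshift : (∫ x in t..(t + κ), Fbar x)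
          = ∫ x in t'..(t' + κ), Fbar (x + δ) := by
        rw [intervalIntegral.integral_comp_add_right Fbar δ]
        congr 1 <;> simp [htdef] <;> ring
      rw [hshift]
      apply intervalIntegral.integral_mono_on (by linarith)
      · exact ((hcont.comp (continuous_add_right δ))).intervalIntegrable _ _
      · exact hcont.intervalIntegrable _ _
      · intro x hx
        have hx0 : (0:ℝ) ≤ x := le_trans ht'.1 hx.1
        exact hmono (Set.mem_Ici.mpr hx0) (Set.mem_Ici.mpr (by linarith)) (by linarith)
  calc sInf (D2 s '' Set.Icc 0 (s / d)) ≤ D2 s t := csInf_le hbdd ⟨t, hmem, rfl⟩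
    _ ≤ D2 s' t' := key
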